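/- Let n ≥ m ≥ 1 be integers and λ, γ > 0. Define θ = 1 − 1/(n/m + R√((n/m)/(λγ))) for some R > 0, τ = (1/(2R))√((mγ)/(nλ)), and σ = (1/(2R))√((nλ)/(mγ)). Then θ·(1/(2τ) + λ) ≥ 1/(2τ). -/

import Mathlib

theorem theta_tau_contraction
    (n m : ℕ) (hm : 1 ≤ m) (hmn : m ≤ n)
    (lam γ R : ℝ) (hlam : 0 < lam) (hγ : 0 < γ) (hR : 0 < R)
    (θ τ : ℝ)
    (hθ : θ = 1 - 1 / ((n : ℝ) / m + R * Real.sqrt (((n : ℝ) / m) / (lam * γ))))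
    (hτ : τ = 1 / (2 * R) * Real.sqrt ((m * γ) / (n * lam))) :
    θ * (1 / (2 * τ) + lam) ≥ 1 / (2 * τ) := by
  have hm' : (0:ℝ) < m := by exact_mod_cast hm
  have hn' : (0:ℝ) < n := lt_of_lt_of_le hm' (by exact_mod_cast hmn)
  set k : ℝ := (n : ℝ) / m with hk
  have hk1 : (1:ℝ) ≤ k := (one_le_div hm').mpr (by exact_mod_cast hmn)
  set c : ℝ := Real.sqrt (k / (lam * γ)) with hc
  have hcpos : 0 < c := Real.sqrt_pos.mpr (by positivity)
  -- lam * c = sqrt (n*lam/(m*γ))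
  have hlc : lam * c = Real.sqrt ((n * lam) / (m * γ)) := by
    rw [hc, ← Real.sqrt_sq hlam.le, ← Real.sqrt_mul (by positivity)]
    congr 1
    field_simp [hk]
    rw [Real.sq_sqrt (sq_nonneg lam), hk, mul_assoc, div_mul_cancel₀ _ hm'.ne']
  have hsqrt : Real.sqrt ((m * γ) / (n * lam)) = (lam * c)⁻¹ := by
    rw [hlc, ← Real.sqrt_inv]
    congr 1
    rw [inv_div]
  have htau : 1 / (2 * τ) = R * lam * c := by
    rw [hτ, hsqrt]
    field_simp
  set D : ℝ := k + R * c with hD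
  have hDpos : 0 < D := by positivity
  have hkey : (R * lam * c + lam) / D ≤ lam := by
    rw [div_le_iff₀ hDpos]
    have : lam * D = lam * k + R * lam * c := by rw [hD]; ring
    nlinarith [mul_le_mul_of_nonneg_left hk1 hlam.le]
  have hθval : θ * (R * lam * c + lam)
      = (R * lam * c + lam) - (R * lam * c + lam) / D := by
    rw [hθ]; field_simp [hD]
  rw [htau, ge_iff_le]
  rw [hθval]
  linarith
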